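/- (Descent direction lemma) Let H̃ = V T Vᵀ + c U Uᵀ be symmetric positive definite, where V ∈ ℝ^{n×l} has orthonormal columns, U spans the orthogonal complement of the range of V, T ∈ ℝ^{l×l} is symmetric positive definite, and c > 0. Suppose the first column of V is ∇f(x)/‖∇f(x)‖₂ (with ∇f(x) ≠ 0). Let y = x − μ V T⁻¹ Vᵀ ∇f(x) for some μ > 0, let x⁺ = Π_{H̃}(y) be the projection of y onto a box C ∋ x in the H̃-norm, and set d = x⁺ − x. Then ∇f(x)ᵀ d ≤ −(1/μ) dᵀ H̃ d ≤ 0; in particular d is a descent direction whenever d ≠ 0. -/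

import Mathlib

open Matrix

/-- Descent direction lemma for PNKH-B: with `H̃ = V T Vᵀ + c U Uᵀ` symmetric positive
definite, `V` with orthonormal columns whose first column is the normalized gradient
`g/‖g‖₂`, `y = x - μ V T⁻¹ Vᵀ g`, and `x⁺` the `H̃`-metric projection of `y` onto the
box `C ∋ x`, the step `d = x⁺ - x` satisfies `gᵀ d ≤ -(1/μ) dᵀ H̃ d ≤ 0`. -/
theorem stmt2 {n l : ℕ} (hl : 0 < l)
    (V : Matrix (Fin n) (Fin l) ℝ) (hV : Vᵀ * V = 1)
    (T : Matrix (Fin l) (Fin l) ℝ) (hT : T.PosDef)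
    (U : Matrix (Fin n) (Fin (n - l)) ℝ) (hU : U * Uᵀ = 1 - V * Vᵀ)
    (c : ℝ) (hc : 0 < c)
    (Ht : Matrix (Fin n) (Fin n) ℝ) (hHt : Ht = V * T * Vᵀ + c • (U * Uᵀ))
    (hHtpd : Ht.PosDef)
    (lo hi : Fin n → ℝ) (C : Set (Fin n → ℝ))
    (hC : C = {v : Fin n → ℝ | ∀ i, lo i ≤ v i ∧ v i ≤ hi i})
    (f : (Fin n → ℝ) → ℝ) (x : Fin n → ℝ) (hx : x ∈ C)
    (g : Fin n → ℝ) (hg : HasGradientAt (fun v : EuclideanSpace ℝ (Fin n) => f v) (WithLp.toLp 2 g) (WithLp.toLp 2 x))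
    (hgne : g ≠ 0)
    (hcol : ∀ i, V i ⟨0, hl⟩ = g i / Real.sqrt (g ⬝ᵥ g))
    (μ : ℝ) (hμ : 0 < μ)
    (y : Fin n → ℝ) (hy : y = x - μ • ((V * T⁻¹ * Vᵀ) *ᵥ g))
    (xp : Fin n → ℝ) (hxpC : xp ∈ C)
    (hproj : ∀ z ∈ C, (xp - y) ⬝ᵥ Ht *ᵥ (xp - y) ≤ (z - y) ⬝ᵥ Ht *ᵥ (z - y))
    (d : Fin n → ℝ) (hd : d = xp - x) :
    g ⬝ᵥ d ≤ -(1 / μ) * (d ⬝ᵥ Ht *ᵥ d) ∧ g ⬝ᵥ d ≤ 0 := by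
  -- symmetry of Ht
  have hTt : Tᵀ = T := by
    have := hT.isHermitian
    simpa [Matrix.IsHermitian, Matrix.conjTranspose_eq_transpose_of_trivial] using this
  have hHtsym : Htᵀ = Ht := by
    have := hHtpd.isHermitian
    simpa [Matrix.IsHermitian, Matrix.conjTranspose_eq_transpose_of_trivial] using this
  have hsym : ∀ u w : Fin n → ℝ, u ⬝ᵥ Ht *ᵥ w = w ⬝ᵥ Ht *ᵥ u := by
    intro u w
    rw [Matrix.dotProduct_mulVec, ← Matrix.mulVec_transpose, hHtsym, dotProduct_comm]
  -- T invertibility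
  have hTdet : IsUnit T.det := isUnit_iff_ne_zero.mpr hT.det_pos.ne'
  have hTinv : T * T⁻¹ = 1 := Matrix.mul_nonsing_inv T hTdet
  -- key matrix identity : Ht * (V * T⁻¹ * Vᵀ) = V * Vᵀ
  have hkeyM : Ht * (V * T⁻¹ * Vᵀ) = V * Vᵀ := by
    have h1 : V * T * Vᵀ * (V * T⁻¹ * Vᵀ) = V * Vᵀ := by
      calc V * T * Vᵀ * (V * T⁻¹ * Vᵀ) = V * ((T * ((Vᵀ * V) * T⁻¹)) * Vᵀ) := by
            simp only [Matrix.mul_assoc]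
        _ = V * Vᵀ := by rw [hV, Matrix.one_mul, hTinv, Matrix.one_mul]
    have h2 : (U * Uᵀ) * (V * T⁻¹ * Vᵀ) = 0 := by
      rw [hU, Matrix.sub_mul, Matrix.one_mul]
      have : V * Vᵀ * (V * T⁻¹ * Vᵀ) = V * T⁻¹ * Vᵀ := by
        calc V * Vᵀ * (V * T⁻¹ * Vᵀ) = V * (((Vᵀ * V) * T⁻¹) * Vᵀ) := by
              simp only [Matrix.mul_assoc]
          _ = V * T⁻¹ * Vᵀ := by rw [hV, Matrix.one_mul, Matrix.mul_assoc]
      rw [this, sub_self]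
    rw [hHt, Matrix.add_mul, h1, Matrix.smul_mul, h2, smul_zero, add_zero]
  -- gradient lies in the range of V : (V * Vᵀ) *ᵥ g = g
  have hgg : 0 < g ⬝ᵥ g := by
    have h0 : 0 ≤ g ⬝ᵥ g := by
      simp only [dotProduct]
      exact Finset.sum_nonneg fun i _ => mul_self_nonneg (g i)
    rcases lt_or_eq_of_le h0 with h | h
    · exact h
    · exact absurd (dotProduct_self_eq_zero.mp h.symm) hgne
  have hν : 0 < Real.sqrt (g ⬝ᵥ g) := Real.sqrt_pos.mpr hgg
  set ν := Real.sqrt (g ⬝ᵥ g) with hνdef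
  have hgeq : g = ν • (V *ᵥ Pi.single ⟨0, hl⟩ 1) := by
    funext i
    simp only [Matrix.mulVec_single_one, Matrix.col_apply, Pi.smul_apply, smul_eq_mul, mul_one, hcol i]
    field_simp
  have hVe : (V * Vᵀ) *ᵥ (V *ᵥ Pi.single ⟨0, hl⟩ 1) = V *ᵥ Pi.single ⟨0, hl⟩ 1 := by
    rw [Matrix.mulVec_mulVec, Matrix.mul_assoc, hV, Matrix.mul_one]
  have hVVg : (V * Vᵀ) *ᵥ g = g := by
    conv_lhs => rw [hgeq]
    rw [Matrix.mulVec_smul, hVe, ← hgeq]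
  -- Ht applied to the unprojected step
  set s : Fin n → ℝ := μ • ((V * T⁻¹ * Vᵀ) *ᵥ g) with hs
  have hHts : Ht *ᵥ s = μ • g := by
    rw [hs, Matrix.mulVec_smul, Matrix.mulVec_mulVec, hkeyM, hVVg]
  have hxys : xp - y = d + s := by
    rw [hy, hd]; funext i; simp [hs]; ring
  -- variational inequality : (x - xp) ⬝ Ht (xp - y) ≥ 0
  have hvar : 0 ≤ (x - xp) ⬝ᵥ Ht *ᵥ (xp - y) := by
    set a := (x - xp) ⬝ᵥ Ht *ᵥ (xp - y) with ha
    set b := (x - xp) ⬝ᵥ Ht *ᵥ (x - xp) with hb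
    have hbnn : 0 ≤ b := by
      have := hHtpd.posSemidef.dotProduct_mulVec_nonneg (x - xp)
      rwa [star_trivial] at this
    have hquad : ∀ t : ℝ, 0 ≤ t → t ≤ 1 → 0 ≤ 2 * t * a + t ^ 2 * b := by
      intro t ht0 ht1
      have hzC : xp + t • (x - xp) ∈ C := by
        rw [hC]
        intro i
        have h1 := (hC ▸ hx) i
        have h2 := (hC ▸ hxpC) i
        constructor <;>
          · simp only [Pi.add_apply, Pi.smul_apply, Pi.sub_apply, smul_eq_mul]
            nlinarith [h1.1, h1.2, h2.1, h2.2]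
      have := hproj _ hzC
      have hexp : (xp + t • (x - xp) - y) ⬝ᵥ Ht *ᵥ (xp + t • (x - xp) - y)
          = (xp - y) ⬝ᵥ Ht *ᵥ (xp - y) + 2 * t * a + t ^ 2 * b := by
        have hrw : xp + t • (x - xp) - y = (xp - y) + t • (x - xp) := by
          funext i; simp; ring
        rw [hrw, ha, hb]
        have hcross : (x - xp) ⬝ᵥ Ht *ᵥ (xp - y) = (xp - y) ⬝ᵥ Ht *ᵥ (x - xp) :=
          hsym _ _
        simp only [Matrix.mulVec_add, Matrix.mulVec_smul, dotProduct_add,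
          add_dotProduct, dotProduct_smul, smul_dotProduct, smul_eq_mul]
        rw [← hcross]
        ring
      rw [hexp] at this
      linarith
    by_contra hneg
    push_neg at hneg
    rcases eq_or_lt_of_le hbnn with hb0 | hbpos
    · have := hquad 1 zero_le_one le_rfl
      nlinarith
    · have htle : min 1 (-a / b) ≤ 1 := min_le_left _ _
      have ht0 : 0 < min 1 (-a / b) :=
        lt_min one_pos (div_pos (neg_pos.mpr hneg) hbpos)
      have := hquad _ ht0.le htle
      have htb : min 1 (-a / b) ≤ -a / b := min_le_right _ _
      have : 0 ≤ min 1 (-a / b) * (2 * a + min 1 (-a / b) * b) := by nlinarith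
      have h2 : 2 * a + min 1 (-a / b) * b < 0 := by
        have : min 1 (-a / b) * b ≤ (-a / b) * b :=
          mul_le_mul_of_nonneg_right htb hbpos.le
        have hab : (-a / b) * b = -a := by field_simp
        nlinarith
      nlinarith
  -- combine : (x - xp) = -d, xp - y = d + s
  have hxd : x - xp = -d := by rw [hd]; funext i; simp
  rw [hxd, hxys] at hvar
  have hexp2 : (-d) ⬝ᵥ Ht *ᵥ (d + s) = -(d ⬝ᵥ Ht *ᵥ d) - d ⬝ᵥ (Ht *ᵥ s) := by
    simp only [Matrix.mulVec_add, dotProduct_add, neg_dotProduct]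
    ring
  rw [hexp2, hHts] at hvar
  have hds : d ⬝ᵥ (μ • g) = μ * (g ⬝ᵥ d) := by
    rw [dotProduct_smul, smul_eq_mul, dotProduct_comm]
  rw [hds] at hvar
  have hdd : 0 ≤ d ⬝ᵥ Ht *ᵥ d := by
    have := hHtpd.posSemidef.dotProduct_mulVec_nonneg d
    rwa [star_trivial] at this
  have h2 : g ⬝ᵥ d * μ ≤ -(d ⬝ᵥ Ht *ᵥ d) := by
    rw [mul_comm]
    linarith
  have hfirst : g ⬝ᵥ d ≤ -(1 / μ) * (d ⬝ᵥ Ht *ᵥ d) :=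
    calc g ⬝ᵥ d ≤ -(d ⬝ᵥ Ht *ᵥ d) / μ := (le_div_iff₀ hμ).mpr h2
      _ = -(1 / μ) * (d ⬝ᵥ Ht *ᵥ d) := by ring
  refine ⟨hfirst, ?_⟩
  have hpos : 0 ≤ (1 / μ) * (d ⬝ᵥ Ht *ᵥ d) :=
    mul_nonneg (by positivity) hdd
  linarith
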